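/- Taking determinants commutes with the block-determinant in the following sense: let φ : AddMonoidAlgebra R G → Matrix G G R be the map φ f = (fun i j => f (i + j)) sending a group algebra element to the corresponding Hadamard matrix. Then for every s and every matrix M : Matrix (Fin s) (Fin s) (AddMonoidAlgebra R G), one has det (M.map (fun f => (φ f).det)) = (φ (M.det)).det, where M.det is the determinant of M over the commutative ring AddMonoidAlgebra R G. -/

import Mathlib

open Matrix

private lemma detFromBlocksSymm {n : Type*} [DecidableEq n] [Fintype n]
    {R : Type*} [CommRing R] [CharP R 2] (A B : Matrix n n R) :
    (Matrix.fromBlocks A B B A).det = (A + B).det * (A + B).det := by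
  have h2 : ∀ X : Matrix n n R, X + X = 0 := fun X => by
    ext i j
    simpa using CharTwo.add_self_eq_zero (X i j)
  have key : Matrix.fromBlocks (1 : Matrix n n R) 1 0 1 * Matrix.fromBlocks A B B A *
      Matrix.fromBlocks (1 : Matrix n n R) 1 0 1
      = Matrix.fromBlocks (A + B) 0 B (B + A) := by
    have hAB : (A + B) + (B + A) = 0 := by rw [add_comm B A]; exact h2 _
    simp only [Matrix.fromBlocks_multiply, Matrix.one_mul, Matrix.mul_one, Matrix.zero_mul,
      Matrix.mul_zero, add_zero, zero_add]
    rw [hAB]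
  have hdet := congrArg Matrix.det key
  rw [Matrix.det_mul, Matrix.det_mul, Matrix.det_fromBlocks_zero₂₁,
    Matrix.det_fromBlocks_zero₁₂] at hdet
  rw [add_comm B A] at hdet
  simpa using hdet

private lemma consAdd {k : ℕ} (a b : ZMod 2) (i j : Fin k → ZMod 2) :
    (Fin.cons a i + Fin.cons b j : Fin (k + 1) → ZMod 2) = Fin.cons (a + b) (i + j) := by
  funext x
  refine Fin.cases ?_ (fun y => ?_) x <;> simp

private def sumEquiv (k : ℕ) :
    ((Fin k → ZMod 2) ⊕ (Fin k → ZMod 2)) ≃ (Fin (k + 1) → ZMod 2) where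
  toFun x := Sum.elim (fun i => Fin.cons 0 i) (fun i => Fin.cons 1 i) x
  invFun g := if g 0 = 0 then Sum.inl (fun i => g i.succ) else Sum.inr (fun i => g i.succ)
  left_inv x := by
    cases x <;> simp [Fin.cons_zero, Fin.cons_succ]
  right_inv g := by
    have hone : ∀ a : ZMod 2, a ≠ 0 → a = 1 := by decide
    by_cases h : g 0 = 0
    · simp only [h, if_pos rfl, Sum.elim_inl]
      funext x
      refine Fin.cases ?_ (fun y => ?_) x <;> simp [h]
    · simp only [h, if_neg h, Sum.elim_inr]
      funext x
      refine Fin.cases ?_ (fun y => ?_) x <;> simp [(hone _ h).symm]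

private lemma detHadamard (R : Type*) [CommRing R] [CharP R 2] :
    ∀ (k : ℕ) (f : (Fin k → ZMod 2) → R),
      (Matrix.of fun i j => f (i + j)).det = (∑ g, f g) ^ 2 ^ k
  | 0, f => by
    rw [Matrix.det_unique]
    simp only [pow_zero, pow_one]
    rw [Fintype.sum_unique f]
    exact congrArg f (Subsingleton.elim _ _)
  | (k + 1), f => by
    set g : (Fin k → ZMod 2) → R := fun i => f (Fin.cons 0 i) + f (Fin.cons 1 i) with hg
    have hre := Matrix.det_reindex_self (sumEquiv k).symm
      (Matrix.of fun i j => f (i + j))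
    have hblocks : (Matrix.reindex (sumEquiv k).symm (sumEquiv k).symm
        (Matrix.of fun i j => f (i + j)))
        = Matrix.fromBlocks (Matrix.of fun i j => f (Fin.cons 0 (i + j)))
            (Matrix.of fun i j => f (Fin.cons 1 (i + j)))
            (Matrix.of fun i j => f (Fin.cons 1 (i + j)))
            (Matrix.of fun i j => f (Fin.cons 0 (i + j))) := by
      have h11 : (1 : ZMod 2) + 1 = 0 := by decide
      ext x y
      cases x <;> cases y <;>
        simp [sumEquiv, consAdd, h11]
    have hsum : (∑ i, g i) = ∑ x, f x := by
      have := Fintype.sum_equiv (sumEquiv k) (fun x => f (sumEquiv k x)) f (fun x => rfl)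
      rw [← this, Fintype.sum_sum_type]
      simp [hg, sumEquiv, Finset.sum_add_distrib]
    have hAB : (Matrix.of fun i j => f (Fin.cons 0 (i + j)))
        + (Matrix.of fun i j => f (Fin.cons 1 (i + j)))
        = (Matrix.of fun i j => g (i + j)) := by
      ext i j; simp [hg]
    rw [← hre, hblocks, detFromBlocksSymm, hAB, detHadamard R k g, hsum, ← pow_add,
      ← two_mul, ← pow_succ']

private noncomputable def eps (k : ℕ) (R : Type*) [CommRing R] :
    AddMonoidAlgebra R (Fin k → ZMod 2) →+* R :=
  ((AddMonoidAlgebra.lift R R (Fin k → ZMod 2)) 1).toRingHom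

private lemma eps_apply (k : ℕ) (R : Type*) [CommRing R]
    (f : AddMonoidAlgebra R (Fin k → ZMod 2)) : eps k R f = ∑ g, f.coeff g := by
  classical
  have : eps k R f = f.coeff.sum fun _ b => b := by
    simp [eps, AddMonoidAlgebra.lift_apply]
  rw [this]
  exact Finsupp.sum_fintype _ _ (fun _ => rfl)


/-- Taking determinants commutes with the block determinant: for `φ` the map sending a group
algebra element `f` over `G = Fin k → ZMod 2` to the Hadamard matrix `(i, j) ↦ f (i + j)`, and
any `s × s` matrix `M` over the commutative ring `AddMonoidAlgebra R G`, the determinant of the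
`s × s` matrix of block determinants equals the determinant of the Hadamard matrix associated
to the determinant of `M`. -/
theorem det_map_det_eq_det_hadamard_det (k : ℕ) (R : Type*) [CommRing R] [CharP R 2]
    (s : ℕ) (M : Matrix (Fin s) (Fin s) (AddMonoidAlgebra R (Fin k → ZMod 2))) :
    (M.map (fun f => (Matrix.of fun i j => f.coeff (i + j) :
        Matrix (Fin k → ZMod 2) (Fin k → ZMod 2) R).det)).det
      = (Matrix.of fun i j => M.det.coeff (i + j) :
          Matrix (Fin k → ZMod 2) (Fin k → ZMod 2) R).det := by
  haveI : Fact (Nat.Prime 2) := ⟨by norm_num⟩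
  set ψ : AddMonoidAlgebra R (Fin k → ZMod 2) →+* R :=
    (iterateFrobenius R 2 k).comp (eps k R) with hψ
  have key : ∀ f : AddMonoidAlgebra R (Fin k → ZMod 2),
      (Matrix.of fun i j => f.coeff (i + j) :
        Matrix (Fin k → ZMod 2) (Fin k → ZMod 2) R).det = ψ f := by
    intro f
    rw [detHadamard R k f.coeff, hψ, RingHom.comp_apply, eps_apply, iterateFrobenius_def]
  have h1 : M.map (fun f => (Matrix.of fun i j => f.coeff (i + j) :
      Matrix (Fin k → ZMod 2) (Fin k → ZMod 2) R).det) = M.map ψ := by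
    ext i j; simp [key]
  rw [h1]
  calc (M.map ⇑ψ).det = (ψ.mapMatrix M).det := by rw [RingHom.mapMatrix_apply]
    _ = ψ M.det := (RingHom.map_det ψ M).symm
    _ = _ := (key M.det).symm
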